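/- The Kronecker sequence x_i = iα mod 1 is quasi-uniform over [0,1] if and only if α is a badly approximable number. -/

import Mathlib

open scoped BigOperators

/-- The Gauss-map iterates: `alphaSeq α m` is `α_m`. -/
noncomputable def alphaSeq (α : ℝ) : ℕ → ℝ
  | 0 => Int.fract α
  | m + 1 => Int.fract (1 / alphaSeq α m)

/-- Partial quotients of the continued fraction of `α`: `partialQuot α (m+1) = a_{m+1} = ⌊1/α_m⌋`. -/
noncomputable def partialQuot (α : ℝ) : ℕ → ℕ
  | 0 => (⌊α⌋).toNat
  | m + 1 => (⌊1 / alphaSeq α m⌋).toNat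

/-- `eta α (m+1) = η_m = ∏_{j=0}^m α_j`, with `eta α 0 = η_{-1} = 1`. -/
noncomputable def eta (α : ℝ) : ℕ → ℝ
  | 0 => 1
  | m + 1 => eta α m * alphaSeq α m

/-- `denomSeq α m = s_m`. -/
noncomputable def denomSeq (α : ℝ) : ℕ → ℕ
  | 0 => 1
  | 1 => partialQuot α 1
  | m + 2 => partialQuot α (m + 2) * denomSeq α (m + 1) + denomSeq α m

/-- `denomPred α m = s_{m-1}`, with `s_{-1} = 0`. -/
noncomputable def denomPred (α : ℝ) : ℕ → ℕ
  | 0 => 0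
  | m + 1 => denomSeq α m

/-- `nSeq α m = n_m = s_m + s_{m-1}` (so `n_0 = 1`). -/
noncomputable def nSeq (α : ℝ) (m : ℕ) : ℕ := denomSeq α m + denomPred α m

/-- The Kronecker sequence `x_i = iα mod 1`. -/
noncomputable def kron (α : ℝ) (i : ℕ) : ℝ := Int.fract (i * α)

/-- Fill distance of the first `n` points of `x` in `[0,1]`. -/
noncomputable def fillDist (x : ℕ → ℝ) (n : ℕ) : ℝ :=
  ⨆ y : Set.Icc (0:ℝ) 1, ⨅ i : Fin n, |(y : ℝ) - x i|

/-- Separation radius of the first `n` points of `x`. -/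
noncomputable def sepRad (x : ℕ → ℝ) (n : ℕ) : ℝ :=
  (1 / 2) * ⨅ p : {p : Fin n × Fin n // p.1 < p.2}, |x p.1.1 - x p.1.2|

/-- The first `n` Kronecker points, sorted increasingly. -/
noncomputable def sortedKron (α : ℝ) (n : ℕ) : List ℝ :=
  ((Finset.range n).image (kron α)).sort (· ≤ ·)

/-- The `n` consecutive gap lengths of the first `n` Kronecker points,
including the wrap-around gap up to `1`. -/
noncomputable def kronGaps (α : ℝ) (n : ℕ) : List ℝ :=
  List.zipWith (fun a b => b - a) (sortedKron α n) ((sortedKron α n).tail ++ [1])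









section CF
variable {α : ℝ} (hirr : Irrational α)

lemma Irrational.fract' (h : Irrational α) : Irrational (Int.fract α) := by
  rw [Int.fract]; exact Irrational.sub_intCast h ⌊α⌋

include hirr

lemma alphaSeq_irr : ∀ m, Irrational (alphaSeq α m) := by
  intro m
  induction m with
  | zero => exact hirr.fract'
  | succ m ih =>
      have : Irrational (1 / alphaSeq α m) := by
        rw [one_div]
        exact ih.inv
      exact this.fract'

lemma alphaSeq_pos : ∀ m, 0 < alphaSeq α m ∧ alphaSeq α m < 1 := by
  intro m
  have hi := alphaSeq_irr hirr m
  have h0 : alphaSeq α m ≠ 0 := by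
    intro h; exact hi.ne_rat 0 (by push_cast; exact h)
  cases m with
  | zero =>
      refine ⟨lt_of_le_of_ne (Int.fract_nonneg α) ?_, Int.fract_lt_one α⟩
      exact fun h => h0 h.symm
  | succ m =>
      refine ⟨lt_of_le_of_ne (Int.fract_nonneg _) ?_, Int.fract_lt_one _⟩
      exact fun h => h0 h.symm

lemma one_lt_inv_alphaSeq (m : ℕ) : 1 < 1 / alphaSeq α m :=
  (lt_div_iff₀ ((alphaSeq_pos hirr m).1)).mpr (by have := (alphaSeq_pos hirr m).2; linarith)

lemma one_le_partialQuot (m : ℕ) : 1 ≤ partialQuot α (m + 1) := by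
  have h := one_lt_inv_alphaSeq hirr m
  have : (1 : ℤ) ≤ ⌊1 / alphaSeq α m⌋ := by
    rw [Int.le_floor]; exact_mod_cast h.le
  simpa [partialQuot] using Int.toNat_le_toNat this

lemma partialQuot_cast (m : ℕ) : ((partialQuot α (m + 1) : ℤ) : ℝ) = (⌊1 / alphaSeq α m⌋ : ℝ) := by
  have h := one_lt_inv_alphaSeq hirr m
  have h1 : (1 : ℤ) ≤ ⌊1 / alphaSeq α m⌋ := by rw [Int.le_floor]; exact_mod_cast h.le
  simp only [partialQuot, Int.toNat_of_nonneg (by linarith : (0:ℤ) ≤ ⌊1 / alphaSeq α m⌋)]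

lemma alphaSeq_succ (m : ℕ) :
    alphaSeq α (m + 1) = 1 / alphaSeq α m - partialQuot α (m + 1) := by
  have := partialQuot_cast hirr m
  rw [show alphaSeq α (m+1) = Int.fract (1 / alphaSeq α m) from rfl, Int.fract]
  push_cast at this ⊢
  rw [this]

lemma eta_pos : ∀ m, 0 < eta α m := by
  intro m
  induction m with
  | zero => norm_num [eta]
  | succ m ih => exact mul_pos ih (alphaSeq_pos hirr m).1

lemma eta_succ_lt (m : ℕ) : eta α (m + 1) < eta α m := by
  have := (alphaSeq_pos hirr m).2
  have h := eta_pos hirr m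
  calc eta α (m+1) = eta α m * alphaSeq α m := rfl
    _ < eta α m * 1 := by exact (mul_lt_mul_iff_right₀ h).mpr this
    _ = eta α m := mul_one _

lemma eta_le_one (m : ℕ) : eta α m ≤ 1 := by
  induction m with
  | zero => norm_num [eta]
  | succ m ih => exact le_trans (eta_succ_lt hirr m).le ih

lemma eta_anti {m k : ℕ} (h : m ≤ k) : eta α k ≤ eta α m := by
  induction k with
  | zero => simp_all
  | succ k ih =>
      rcases Nat.lt_or_ge m (k+1) with h' | h'
      · exact le_trans (eta_succ_lt hirr k).le (ih (Nat.lt_succ_iff.mp h'))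
      · have : m = k + 1 := le_antisymm h h'
        simp [this]

lemma eta_rec (m : ℕ) :
    eta α (m + 2) = eta α m - partialQuot α (m + 1) * eta α (m + 1) := by
  have h1 : eta α (m + 2) = eta α (m+1) * alphaSeq α (m+1) := rfl
  have h2 : eta α (m + 1) = eta α m * alphaSeq α m := rfl
  have h3 := alphaSeq_succ hirr m
  have h0 : alphaSeq α m ≠ 0 := ne_of_gt (alphaSeq_pos hirr m).1
  rw [h1, h3, h2]
  field_simp

omit hirr in
lemma eta_one : eta α 1 = Int.fract α := by simp [eta, alphaSeq]

end CF

noncomputable def numSeq (α : ℝ) : ℕ → ℕ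
  | 0 => 0
  | 1 => 1
  | m + 2 => partialQuot α (m + 2) * numSeq α (m + 1) + numSeq α m

section CF2
variable {α : ℝ} (hirr : Irrational α)
include hirr

/-- Key identity: `(-1)^m (s_m α₀ - p_m) = η_m`. -/
lemma key_identity : ∀ m : ℕ,
    ((-1 : ℝ)) ^ m * ((denomSeq α m : ℝ) * Int.fract α - (numSeq α m : ℝ)) = eta α (m + 1) := by
  have base0 : ((-1 : ℝ)) ^ 0 * ((denomSeq α 0 : ℝ) * Int.fract α - (numSeq α 0 : ℝ)) = eta α 1 := by
    simp [denomSeq, numSeq, eta_one]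
  have base1 : ((-1 : ℝ)) ^ 1 * ((denomSeq α 1 : ℝ) * Int.fract α - (numSeq α 1 : ℝ)) = eta α 2 := by
    have h2 : eta α 2 = eta α 0 - (partialQuot α 1 : ℝ) * eta α 1 := eta_rec hirr 0
    have h0 : eta α 0 = 1 := rfl
    simp only [denomSeq, numSeq, pow_one, h2, eta_one, h0]
    push_cast
    ring
  intro m
  induction m using Nat.twoStepInduction with
  | zero => exact base0
  | one => exact base1
  | more m ih1 ih2 =>
      have hrec : eta α (m + 3) = eta α (m+1) - (partialQuot α (m + 2) : ℝ) * eta α (m + 2) :=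
        eta_rec hirr (m + 1)
      have hs : (denomSeq α (m+2) : ℝ) = (partialQuot α (m+2) : ℝ) * denomSeq α (m+1) + denomSeq α m := by
        simp [denomSeq]; try (push_cast; ring)
      have hp : (numSeq α (m+2) : ℝ) = (partialQuot α (m+2) : ℝ) * numSeq α (m+1) + numSeq α m := by
        simp [numSeq]; try (push_cast; ring)
      rw [show m + 2 + 1 = m + 3 from rfl, hrec, ← ih1, ← ih2, hs, hp]
      ring

/-- `s_{m+1} η_m + s_m η_{m+1} = 1`. -/
lemma denom_eta_identity : ∀ m : ℕ,
    (denomSeq α (m+1) : ℝ) * eta α (m+1) + (denomSeq α m : ℝ) * eta α (m+2) = 1 := by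
  intro m
  induction m with
  | zero =>
      have h2 : eta α 2 = eta α 0 - (partialQuot α 1 : ℝ) * eta α 1 := eta_rec hirr 0
      have h0 : eta α 0 = 1 := rfl
      simp only [denomSeq, h2, h0]
      rw [eta_one]
      ring
  | succ m ih =>
      have hrec : eta α (m + 3) = eta α (m+1) - (partialQuot α (m + 2) : ℝ) * eta α (m + 2) :=
        eta_rec hirr (m + 1)
      have hs : (denomSeq α (m+2) : ℝ) = (partialQuot α (m+2) : ℝ) * denomSeq α (m+1) + denomSeq α m := by
        simp [denomSeq]; try (push_cast; ring)
      rw [show m + 1 + 1 = m + 2 from rfl, show m + 1 + 2 = m + 3 from rfl, hs, hrec]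
      nlinarith [ih]

lemma one_le_denomSeq : ∀ m, 1 ≤ denomSeq α m := by
  intro m
  induction m using Nat.twoStepInduction with
  | zero => simp [denomSeq]
  | one => simpa [denomSeq] using one_le_partialQuot hirr 0
  | more m ih1 ih2 =>
      have := one_le_partialQuot hirr (m+1)
      have : 1 ≤ partialQuot α (m+2) * denomSeq α (m+1) := Nat.one_le_iff_ne_zero.mpr
        (by positivity)
      simp only [denomSeq]; omega

lemma denomSeq_mono : ∀ m, denomSeq α m ≤ denomSeq α (m+1) := by
  intro m
  cases m with
  | zero => simpa [denomSeq] using one_le_partialQuot hirr 0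
  | succ m =>
      have h1 := one_le_partialQuot hirr (m+1)
      have h2 := one_le_denomSeq hirr (m+1)
      have h3 := one_le_denomSeq hirr m
      have : denomSeq α (m+2) = partialQuot α (m+2) * denomSeq α (m+1) + denomSeq α m := rfl
      nlinarith

lemma le_denomSeq : ∀ m, m ≤ denomSeq α m := by
  intro m
  induction m using Nat.twoStepInduction with
  | zero => simp
  | one => simpa [denomSeq] using one_le_partialQuot hirr 0
  | more m ih1 ih2 =>
      have h1 := one_le_partialQuot hirr (m+1)
      have h3 := one_le_denomSeq hirr m
      have : denomSeq α (m+2) = partialQuot α (m+2) * denomSeq α (m+1) + denomSeq α m := rfl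
      nlinarith

lemma pq_mul_le_denomSeq : ∀ m, partialQuot α (m+1) * denomSeq α m ≤ denomSeq α (m+1) := by
  intro m
  cases m with
  | zero => simp [denomSeq]
  | succ m => simp [denomSeq]

/-- determinant identity -/
lemma det_identity : ∀ m : ℕ,
    (denomSeq α (m+1) : ℤ) * (numSeq α m : ℤ) - (denomSeq α m : ℤ) * (numSeq α (m+1) : ℤ)
      = (-1) ^ (m+1) := by
  intro m
  induction m with
  | zero => simp [denomSeq, numSeq]
  | succ m ih =>
      have hs : (denomSeq α (m+2) : ℤ) = (partialQuot α (m+2) : ℤ) * denomSeq α (m+1) + denomSeq α m := by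
        simp [denomSeq]; try (push_cast; ring)
      have hp : (numSeq α (m+2) : ℤ) = (partialQuot α (m+2) : ℤ) * numSeq α (m+1) + numSeq α m := by
        simp [numSeq]; try (push_cast; ring)
      rw [show m + 1 + 1 = m + 2 from rfl, hs, hp, pow_succ]
      nlinarith [ih]

end CF2

section CF3
variable {α : ℝ} (hirr : Irrational α)
include hirr

lemma eta_lt_one' (m : ℕ) : eta α (m + 1) < 1 := by
  have h1 : eta α (m+1) ≤ eta α 1 := eta_anti hirr (by omega)
  rw [eta_one] at h1
  exact lt_of_le_of_lt h1 (Int.fract_lt_one α)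

/-- Best approximation property. -/
lemma best_approx (m : ℕ) (k : ℕ) (hk1 : 1 ≤ k) (hk2 : k < denomSeq α (m+1)) (c : ℤ) :
    eta α (m+1) ≤ |(k : ℝ) * Int.fract α - (c : ℝ)| := by
  obtain ⟨s1, hs1⟩ : ∃ s1 : ℤ, s1 = (denomSeq α (m+1) : ℤ) := ⟨_, rfl⟩
  obtain ⟨s0, hs0⟩ : ∃ s0 : ℤ, s0 = (denomSeq α m : ℤ) := ⟨_, rfl⟩
  obtain ⟨p1, hp1⟩ : ∃ p1 : ℤ, p1 = (numSeq α (m+1) : ℤ) := ⟨_, rfl⟩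
  obtain ⟨p0, hp0⟩ : ∃ p0 : ℤ, p0 = (numSeq α m : ℤ) := ⟨_, rfl⟩
  have hdet : s1 * p0 - s0 * p1 = (-1) ^ (m+1) := by rw [hs1, hs0, hp1, hp0]; exact det_identity hirr m
  have he : ((-1:ℤ)) ^ (m+1) * (-1) ^ (m+1) = 1 := by rw [← mul_pow]; norm_num
  obtain ⟨x, hx⟩ : ∃ x : ℤ, x = (-1) ^ (m+1) * (p0 * k - s0 * c) := ⟨_, rfl⟩
  obtain ⟨y, hy⟩ : ∃ y : ℤ, y = (-1) ^ (m+1) * (s1 * c - p1 * k) := ⟨_, rfl⟩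
  have h1 : x * s1 + y * s0 = (k : ℤ) := by
    have h : x * s1 + y * s0 = ((k : ℤ) * (s1 * p0 - s0 * p1)) * (-1) ^ (m+1) := by
      rw [hx, hy]; ring
    rw [hdet] at h
    rw [h]; linear_combination ((k : ℤ)) * he
  have h2 : x * p1 + y * p0 = c := by
    have h : x * p1 + y * p0 = (c * (s1 * p0 - s0 * p1)) * (-1) ^ (m+1) := by
      rw [hx, hy]; ring
    rw [hdet] at h
    rw [h]; linear_combination c * he
  have hsgn1 : ((-1:ℝ))^(m+1) * ((-1:ℝ))^(m+1) = 1 := by rw [← mul_pow]; norm_num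
  have hsgn0 : ((-1:ℝ))^m * ((-1:ℝ))^m = 1 := by rw [← mul_pow]; norm_num
  have hkey1 : (denomSeq α (m+1) : ℝ) * Int.fract α - (numSeq α (m+1) : ℝ)
      = (-1)^(m+1) * eta α (m+2) := by
    have h := key_identity hirr (m+1)
    calc (denomSeq α (m+1) : ℝ) * Int.fract α - (numSeq α (m+1) : ℝ)
        = ((-1:ℝ)^(m+1) * (-1)^(m+1))
            * ((denomSeq α (m+1) : ℝ) * Int.fract α - (numSeq α (m+1) : ℝ)) := by
          rw [hsgn1, one_mul]
      _ = (-1:ℝ)^(m+1) * ((-1:ℝ)^(m+1)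
            * ((denomSeq α (m+1) : ℝ) * Int.fract α - (numSeq α (m+1) : ℝ))) := by ring
      _ = (-1)^(m+1) * eta α (m+2) := by rw [h]
  have hkey0 : (denomSeq α m : ℝ) * Int.fract α - (numSeq α m : ℝ)
      = (-1)^m * eta α (m+1) := by
    have h := key_identity hirr m
    calc (denomSeq α m : ℝ) * Int.fract α - (numSeq α m : ℝ)
        = ((-1:ℝ)^m * (-1)^m)
            * ((denomSeq α m : ℝ) * Int.fract α - (numSeq α m : ℝ)) := by
          rw [hsgn0, one_mul]
      _ = (-1:ℝ)^m * ((-1:ℝ)^m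
            * ((denomSeq α m : ℝ) * Int.fract α - (numSeq α m : ℝ))) := by ring
      _ = (-1)^m * eta α (m+1) := by rw [h]
  have h1' : (x : ℝ) * (denomSeq α (m+1) : ℝ) + (y : ℝ) * (denomSeq α m : ℝ) = (k : ℝ) := by
    have := congrArg (Int.cast : ℤ → ℝ) h1
    push_cast at this
    push_cast [hs1, hs0] at this ⊢
    linarith
  have h2' : (x : ℝ) * (numSeq α (m+1) : ℝ) + (y : ℝ) * (numSeq α m : ℝ) = (c : ℝ) := by
    have := congrArg (Int.cast : ℤ → ℝ) h2
    push_cast at this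
    push_cast [hp1, hp0] at this ⊢
    linarith
  obtain ⟨E0, hE0⟩ : ∃ E0 : ℝ, E0 = eta α (m+1) := ⟨_, rfl⟩
  obtain ⟨E1, hE1⟩ : ∃ E1 : ℝ, E1 = eta α (m+2) := ⟨_, rfl⟩
  rw [← hE0]
  have hE0pos : 0 < E0 := hE0 ▸ eta_pos hirr (m+1)
  have hE1pos : 0 < E1 := hE1 ▸ eta_pos hirr (m+2)
  obtain ⟨u, hu⟩ : ∃ u : ℤ, u = x * (-1)^(m+1) := ⟨_, rfl⟩
  obtain ⟨v, hv⟩ : ∃ v : ℤ, v = y * (-1)^m := ⟨_, rfl⟩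
  have hexp2 : (k : ℝ) * Int.fract α - (c : ℝ) = (u : ℝ) * E1 + (v : ℝ) * E0 := by
    have : (k : ℝ) * Int.fract α - (c : ℝ)
        = (x : ℝ) * ((denomSeq α (m+1) : ℝ) * Int.fract α - (numSeq α (m+1) : ℝ))
          + (y : ℝ) * ((denomSeq α m : ℝ) * Int.fract α - (numSeq α m : ℝ)) := by
      rw [← h1', ← h2']; ring
    rw [this, hkey1, hkey0, hu, hv, hE0, hE1]
    push_cast
    ring
  have hs1pos : (0 : ℤ) < s1 := by
    rw [hs1]; exact_mod_cast Nat.lt_of_lt_of_le Nat.zero_lt_one (one_le_denomSeq hirr (m+1))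
  have hs0pos : (0 : ℤ) < s0 := by
    rw [hs0]; exact_mod_cast Nat.lt_of_lt_of_le Nat.zero_lt_one (one_le_denomSeq hirr m)
  have hkpos : (0 : ℤ) < (k : ℤ) := by exact_mod_cast hk1
  have hklt : (k : ℤ) < s1 := by rw [hs1]; exact_mod_cast hk2
  rcases eq_or_ne y 0 with hy0 | hy0
  · -- y = 0 : contradiction with k < s1
    exfalso
    rw [hy0, zero_mul, add_zero] at h1
    have hxpos : 0 < x := by
      by_contra h
      push_neg at h
      linarith [mul_nonpos_of_nonpos_of_nonneg h hs1pos.le]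
    have hx1 : 1 ≤ x := hxpos
    linarith [mul_le_mul_of_nonneg_right hx1 hs1pos.le]
  · rcases eq_or_ne x 0 with hx0 | hx0
    · have hvne : v ≠ 0 := by
        rw [hv]
        intro h
        rcases mul_eq_zero.mp h with h' | h'
        · exact hy0 h'
        · exact (by positivity : ((-1:ℤ))^m ≠ 0) h'
      have h1v : 1 ≤ |v| := Int.one_le_abs hvne
      have hu0 : u = 0 := by rw [hu, hx0, zero_mul]
      rw [hexp2, hu0]
      push_cast
      rw [zero_mul, zero_add, abs_mul, abs_of_pos hE0pos]
      have hv1 : (1:ℝ) ≤ |(v:ℝ)| := by exact_mod_cast h1v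
      have := mul_le_mul_of_nonneg_right hv1 hE0pos.le
      linarith
    · -- x ≠ 0, y ≠ 0
      have hxy : x * y < 0 := by
        rcases lt_or_gt_of_ne hx0 with hxneg | hxpos
        · rcases lt_or_gt_of_ne hy0 with hyneg | hypos
          · exfalso
            linarith [mul_neg_of_neg_of_pos hxneg hs1pos, mul_neg_of_neg_of_pos hyneg hs0pos]
          · exact mul_neg_of_neg_of_pos hxneg hypos
        · rcases lt_or_gt_of_ne hy0 with hyneg | hypos
          · exact mul_neg_of_pos_of_neg hxpos hyneg
          · exfalso
            have hx1 : 1 ≤ x := hxpos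
            have hy1 : 1 ≤ y := hypos
            have ha := mul_le_mul_of_nonneg_right hx1 hs1pos.le
            have hb := mul_le_mul_of_nonneg_right hy1 hs0pos.le
            have hc := mul_pos (lt_of_lt_of_le zero_lt_one hy1) hs0pos
            linarith
      have huv : 0 < u * v := by
        have hcomp : u * v = (x * y) * ((-1:ℤ)^(m+1) * (-1)^m) := by rw [hu, hv]; ring
        have hneg : ((-1:ℤ))^(m+1) * (-1)^m = -(((-1:ℤ))^m * (-1)^m) := by ring
        have hone : ((-1:ℤ))^m * (-1)^m = 1 := by rw [← mul_pow]; norm_num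
        rw [hneg, hone] at hcomp
        linarith
      rw [hexp2]
      rcases pos_and_pos_or_neg_and_neg_of_mul_pos huv with ⟨hup, hvp⟩ | ⟨hun, hvn⟩
      · have h1u : (1:ℝ) ≤ (u:ℝ) := by exact_mod_cast hup
        have h1v : (1:ℝ) ≤ (v:ℝ) := by exact_mod_cast hvp
        have ha := mul_le_mul_of_nonneg_right h1u hE1pos.le
        have hb := mul_le_mul_of_nonneg_right h1v hE0pos.le
        rw [abs_of_pos (by linarith)]
        linarith
      · have hun' : u ≤ -1 := by omega
        have hvn' : v ≤ -1 := by omega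
        have h1u : (u:ℝ) ≤ -1 := by exact_mod_cast hun'
        have h1v : (v:ℝ) ≤ -1 := by exact_mod_cast hvn'
        have ha := mul_le_mul_of_nonneg_right h1u hE1pos.le
        have hb := mul_le_mul_of_nonneg_right h1v hE0pos.le
        rw [abs_of_neg (by linarith)]
        linarith

end CF3

section CF4
variable {α : ℝ} (hirr : Irrational α)

omit hirr in
lemma kron_fract (k : ℕ) : Int.fract ((k:ℝ) * α) = Int.fract ((k:ℝ) * Int.fract α) := by
  have h : (k:ℝ) * α = (k:ℝ) * Int.fract α + ((k * ⌊α⌋ : ℤ) : ℝ) := by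
    rw [Int.fract]
    push_cast
    ring
  rw [h, Int.fract_add_intCast]

include hirr

lemma best_approx_fract (m k : ℕ) (hk1 : 1 ≤ k) (hk2 : k < denomSeq α (m+1)) :
    eta α (m+1) ≤ Int.fract ((k:ℝ) * α) ∧ eta α (m+1) ≤ 1 - Int.fract ((k:ℝ) * α) := by
  rw [kron_fract]
  set t := (k:ℝ) * Int.fract α with ht
  constructor
  · have h := best_approx hirr m k hk1 hk2 ⌊t⌋
    have hfr : Int.fract t = t - ⌊t⌋ := rfl
    have hnn : (0:ℝ) ≤ t - ⌊t⌋ := by rw [← hfr]; exact Int.fract_nonneg t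
    rw [ht] at hnn
    rw [abs_of_nonneg hnn] at h
    have : Int.fract t = t - ⌊t⌋ := rfl
    rw [this, ht]
    exact h
  · have h := best_approx hirr m k hk1 hk2 (⌊t⌋ + 1)
    have habs : |t - ((⌊t⌋ : ℤ) + 1 : ℤ)| = 1 - Int.fract t := by
      have h1 : t - ((⌊t⌋ : ℝ) + 1) = Int.fract t - 1 := by rw [Int.fract]; ring
      have h2 : Int.fract t - 1 < 0 := by linarith [Int.fract_lt_one t]
      push_cast
      rw [h1, abs_of_neg h2]
      ring
    rwa [habs] at h

lemma fract_denomSeq_even (m : ℕ) (h : Even m) :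
    Int.fract ((denomSeq α m : ℝ) * α) = eta α (m+1) := by
  rw [kron_fract]
  have hk := key_identity hirr m
  rw [h.neg_one_pow, one_mul] at hk
  have : (denomSeq α m : ℝ) * Int.fract α = ((numSeq α m : ℤ) : ℝ) + eta α (m+1) := by
    push_cast; linarith
  rw [this, Int.fract_intCast_add, Int.fract_eq_self.mpr
    ⟨(eta_pos hirr (m+1)).le, eta_lt_one' hirr m⟩]

lemma fract_denomSeq_odd (m : ℕ) (h : Odd m) :
    Int.fract ((denomSeq α m : ℝ) * α) = 1 - eta α (m+1) := by
  rw [kron_fract]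
  have hk := key_identity hirr m
  rw [h.neg_one_pow] at hk
  have : (denomSeq α m : ℝ) * Int.fract α
      = (((numSeq α m : ℤ) - 1 : ℤ) : ℝ) + (1 - eta α (m+1)) := by
    push_cast; linarith
  rw [this, Int.fract_intCast_add, Int.fract_eq_self.mpr
    ⟨by linarith [eta_lt_one' hirr m], by linarith [eta_pos hirr (m+1)]⟩]

end CF4







section Geom
variable {α : ℝ} {n : ℕ}

lemma kron_zero : kron α 0 = 0 := by simp [kron]

lemma kron_nonneg (i : ℕ) : 0 ≤ kron α i := Int.fract_nonneg _

lemma kron_lt_one (i : ℕ) : kron α i < 1 := Int.fract_lt_one _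

instance iccNonempty : Nonempty (Set.Icc (0:ℝ) 1) := ⟨⟨0, by norm_num⟩⟩

lemma iInf_abs_bddBelow (y : ℝ) : BddBelow (Set.range fun i : Fin n => |y - kron α i|) :=
  ⟨0, by rintro r ⟨i, rfl⟩; positivity⟩

lemma iInf_abs_le (hn : 0 < n) (y : ℝ) (i : Fin n) :
    (⨅ j : Fin n, |y - kron α j|) ≤ |y - kron α i| :=
  ciInf_le (iInf_abs_bddBelow y) i

lemma iInf_abs_le_one (hn : 0 < n) (y : Set.Icc (0:ℝ) 1) :
    (⨅ j : Fin n, |(y:ℝ) - kron α j|) ≤ 1 := by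
  refine le_trans (iInf_abs_le hn (y:ℝ) ⟨0, hn⟩) ?_
  rw [kron_zero, sub_zero, abs_of_nonneg y.2.1]
  exact y.2.2

lemma fillDist_bddAbove (hn : 0 < n) :
    BddAbove (Set.range fun y : Set.Icc (0:ℝ) 1 => ⨅ i : Fin n, |(y:ℝ) - kron α i|) :=
  ⟨1, by rintro r ⟨y, rfl⟩; exact iInf_abs_le_one hn y⟩

lemma fillDist_le (hn : 0 < n) {b : ℝ}
    (hb : ∀ y : ℝ, 0 ≤ y → y ≤ 1 → ∃ i : Fin n, |y - kron α i| ≤ b) :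
    fillDist (kron α) n ≤ b := by
  haveI : Nonempty (Fin n) := ⟨⟨0, hn⟩⟩
  refine ciSup_le fun y => ?_
  obtain ⟨i, hi⟩ := hb y y.2.1 y.2.2
  exact ciInf_le_of_le (iInf_abs_bddBelow _) i hi

lemma fillDist_ge (hn : 0 < n) {b : ℝ} {y : ℝ} (hy0 : 0 ≤ y) (hy1 : y ≤ 1)
    (hb : ∀ i : Fin n, b ≤ |y - kron α i|) :
    b ≤ fillDist (kron α) n := by
  haveI : Nonempty (Fin n) := ⟨⟨0, hn⟩⟩
  have h1 : b ≤ ⨅ i : Fin n, |(y : ℝ) - kron α i| := le_ciInf hb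
  exact le_trans h1 (le_ciSup (fillDist_bddAbove hn) (⟨y, hy0, hy1⟩ : Set.Icc (0:ℝ) 1))

lemma fillDist_nonneg (hn : 0 < n) : 0 ≤ fillDist (kron α) n := by
  haveI : Nonempty (Fin n) := ⟨⟨0, hn⟩⟩
  refine fillDist_ge hn le_rfl zero_le_one fun i => abs_nonneg _

lemma exists_near (hn : 0 < n) (y : ℝ) (hy0 : 0 ≤ y) (hy1 : y ≤ 1) :
    ∃ i : Fin n, |y - kron α i| ≤ fillDist (kron α) n := by
  haveI : Nonempty (Fin n) := ⟨⟨0, hn⟩⟩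
  obtain ⟨i, hi⟩ := exists_eq_ciInf_of_finite (f := fun i : Fin n => |y - kron α i|)
  refine ⟨i, ?_⟩
  rw [hi]
  exact le_ciSup (fillDist_bddAbove hn) (⟨y, hy0, hy1⟩ : Set.Icc (0:ℝ) 1)

lemma sepRad_le {i j : Fin n} (hij : i < j) :
    sepRad (kron α) n ≤ |kron α i - kron α j| / 2 := by
  have hbdd : BddBelow (Set.range fun p : {p : Fin n × Fin n // p.1 < p.2} =>
      |kron α p.1.1 - kron α p.1.2|) := by
    refine ⟨0, ?_⟩
    rintro r ⟨p, rfl⟩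
    exact abs_nonneg _
  have h : (⨅ p : {p : Fin n × Fin n // p.1 < p.2}, |kron α p.1.1 - kron α p.1.2|)
      ≤ |kron α i - kron α j| :=
    ciInf_le hbdd (⟨(i, j), hij⟩ : {p : Fin n × Fin n // p.1 < p.2})
  rw [sepRad]
  linarith

lemma sepRad_ge (hn : 2 ≤ n) {b : ℝ}
    (hb : ∀ i j : Fin n, i < j → b ≤ |kron α i - kron α j|) :
    b / 2 ≤ sepRad (kron α) n := by
  haveI : Nonempty {p : Fin n × Fin n // p.1 < p.2} :=
    ⟨⟨(⟨0, by omega⟩, ⟨1, by omega⟩), by simp [Fin.lt_def]⟩⟩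
  have h : b ≤ ⨅ p : {p : Fin n × Fin n // p.1 < p.2}, |kron α p.1.1 - kron α p.1.2| :=
    le_ciInf fun p => hb p.1.1 p.1.2 p.2
  rw [sepRad]
  linarith

/-- Pairwise distances are bounded below by the circle distance of the difference. -/
lemma pair_dist (i j : ℕ) (hij : i < j) :
    min (Int.fract (((j - i : ℕ) : ℝ) * α)) (1 - Int.fract (((j - i : ℕ) : ℝ) * α))
      ≤ |kron α i - kron α j| := by
  set d := Int.fract (((j - i : ℕ) : ℝ) * α) with hd
  have hz : kron α j - kron α i - d = ((- ⌊(j:ℝ)*α⌋ + ⌊(i:ℝ)*α⌋ + ⌊((j - i : ℕ) : ℝ)*α⌋ : ℤ) : ℝ) := by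
    rw [kron, kron, hd, Int.fract, Int.fract, Int.fract]
    have : ((j - i : ℕ) : ℝ) = (j : ℝ) - (i : ℝ) := by
      push_cast [Nat.cast_sub hij.le]; ring
    rw [this]
    push_cast
    ring
  set z : ℤ := - ⌊(j:ℝ)*α⌋ + ⌊(i:ℝ)*α⌋ + ⌊((j - i : ℕ) : ℝ)*α⌋ with hzdef
  have hb1 : kron α j - kron α i < 1 := by
    have := kron_lt_one (α := α) j; have := kron_nonneg (α := α) i; linarith
  have hb2 : -1 < kron α j - kron α i := by
    have := kron_lt_one (α := α) i; have := kron_nonneg (α := α) j; linarith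
  have hd0 : 0 ≤ d := Int.fract_nonneg _
  have hd1 : d < 1 := Int.fract_lt_one _
  have hzb : -2 < (z : ℝ) ∧ (z : ℝ) < 1 := by
    constructor <;> [linarith [hz.symm.le, hz.le]; linarith [hz.symm.le, hz.le]]
  have hz2 : z = 0 ∨ z = -1 := by
    have h1 : (-2 : ℤ) < z := by exact_mod_cast hzb.1
    have h2 : z < 1 := by exact_mod_cast hzb.2
    omega
  rcases hz2 with h | h
  · rw [h] at hz
    push_cast at hz
    have : kron α j - kron α i = d := by linarith
    rw [abs_sub_comm, this, abs_of_nonneg hd0]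
    exact min_le_left _ _
  · rw [h] at hz
    push_cast at hz
    have : kron α i - kron α j = 1 - d := by linarith
    rw [this, abs_of_nonneg (by linarith)]
    exact min_le_right _ _

end Geom

section Geom2
open scoped ENNReal
variable {α : ℝ}

/-- Covering (fill distance) upper bound via two return times. -/
lemma fill_le (n k l : ℕ) (hn : 2 ≤ n) (hk1 : 1 ≤ k) (hk : k < n) (hl1 : 1 ≤ l) (hl : l < n)
    (hkpos : 0 < Int.fract ((k:ℝ) * α)) :
    fillDist (kron α) n ≤ Int.fract ((k:ℝ) * α) + (1 - Int.fract ((l:ℝ) * α)) := by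
  set dp := Int.fract ((k:ℝ) * α) with hdp
  set dm := 1 - Int.fract ((l:ℝ) * α) with hdm
  have hdm0 : 0 < dm := by
    rw [hdm]; linarith [Int.fract_lt_one ((l:ℝ) * α)]
  refine fillDist_le (by omega) fun y hy0 hy1 => ?_
  by_cases htriv : 1 ≤ dp + dm
  · exact ⟨⟨0, by omega⟩, by rw [kron_zero, sub_zero, abs_of_nonneg hy0]; linarith⟩
  -- take the largest point ≤ y
  have h0mem : (0 : ℕ) ∈ (Finset.range n).filter (fun i => kron α i ≤ y) := by
    simp [Finset.mem_filter, kron_zero, hy0]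
    omega
  obtain ⟨i, hiS, himax⟩ := Finset.exists_max_image
    ((Finset.range n).filter (fun i => kron α i ≤ y)) (kron α) ⟨0, h0mem⟩
  rw [Finset.mem_filter, Finset.mem_range] at hiS
  obtain ⟨hin, hiy⟩ := hiS
  by_contra hcon
  push_neg at hcon
  have hcon' : ∀ j : ℕ, j < n → kron α j ≤ y → kron α j ≤ kron α i := by
    intro j hj1 hj2
    exact himax j (by rw [Finset.mem_filter, Finset.mem_range]; exact ⟨hj1, hj2⟩)
  have hgap : dp + dm < y - kron α i := by
    have := hcon ⟨i, hin⟩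
    rw [abs_of_nonneg (by linarith : (0:ℝ) ≤ y - kron α i)] at this
    linarith
  have hxi : 0 ≤ kron α i := kron_nonneg i
  -- helper: value of kron at shifted index
  have key : ∀ j : ℕ, j < n → ∀ c : ℝ, (Int.fract ((j:ℝ) * α) - ((j:ℝ) * α)
      = c - ((i:ℝ) * α) - (kron α i) + (kron α i + c - c) → True) := fun _ _ _ _ => trivial
  -- case 1 : i + k < n
  rcases lt_or_ge (i + k) n with hik | hik
  · have hfr : kron α (i + k) = kron α i + dp := by
      have h1 : Int.fract (((i + k : ℕ):ℝ) * α) = Int.fract (kron α i + dp) := by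
        apply Int.fract_eq_fract.mpr
        refine ⟨⌊(i:ℝ)*α⌋ + ⌊(k:ℝ)*α⌋, ?_⟩
        rw [kron, hdp, Int.fract, Int.fract]
        push_cast
        ring
      rw [kron, h1, Int.fract_eq_self.mpr ⟨by linarith, by linarith⟩]
    have : kron α (i + k) ≤ kron α i := hcon' (i+k) hik (by linarith)
    linarith
  · rcases le_or_gt l i with hli | hli
    · -- j = i - l
      have hfr : kron α (i - l) = kron α i + dm := by
        have h1 : Int.fract (((i - l : ℕ):ℝ) * α) = Int.fract (kron α i + dm) := by
          apply Int.fract_eq_fract.mpr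
          refine ⟨⌊(i:ℝ)*α⌋ - ⌊(l:ℝ)*α⌋ - 1, ?_⟩
          have hcast : ((i - l : ℕ) : ℝ) = (i:ℝ) - (l:ℝ) := by
            push_cast [Nat.cast_sub hli]; ring
          rw [hcast, kron, hdm, Int.fract, Int.fract]
          push_cast
          ring
        rw [kron, h1, Int.fract_eq_self.mpr ⟨by linarith, by linarith⟩]
      have : kron α (i - l) ≤ kron α i := hcon' (i - l) (by omega) (by linarith)
      linarith
    · -- j = i + k - l
      have hjlt : i + k - l < n := by omega
      have hle : l ≤ i + k := by omega
      have hfr : kron α (i + k - l) = kron α i + dp + dm := by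
        have h1 : Int.fract (((i + k - l : ℕ):ℝ) * α) = Int.fract (kron α i + dp + dm) := by
          apply Int.fract_eq_fract.mpr
          refine ⟨⌊(i:ℝ)*α⌋ + ⌊(k:ℝ)*α⌋ - ⌊(l:ℝ)*α⌋ - 1, ?_⟩
          have hcast : ((i + k - l : ℕ) : ℝ) = (i:ℝ) + (k:ℝ) - (l:ℝ) := by
            push_cast [Nat.cast_sub hle]; ring
          rw [hcast, kron, hdp, hdm, Int.fract, Int.fract, Int.fract]
          push_cast
          ring
        rw [kron, h1, Int.fract_eq_self.mpr ⟨by linarith, by linarith⟩]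
      have : kron α (i + k - l) ≤ kron α i := hcon' (i + k - l) hjlt (by linarith)
      linarith

/-- Fill distance lower bound `1 ≤ 2 n h_n`. -/
lemma fill_lower (n : ℕ) (hn : 1 ≤ n) : 1 ≤ 2 * (n : ℝ) * fillDist (kron α) n := by
  set h := fillDist (kron α) n with hh
  have hnn : 0 ≤ h := fillDist_nonneg (α := α) (n := n) (lt_of_lt_of_le Nat.zero_lt_one hn)
  have hcover : Set.Icc (0:ℝ) 1 ⊆ ⋃ i : Fin n, Metric.closedBall (kron α i) h := by
    intro y hy
    obtain ⟨i, hi⟩ := exists_near (α := α) (n := n) (lt_of_lt_of_le Nat.zero_lt_one hn) y hy.1 hy.2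
    exact Set.mem_iUnion.mpr ⟨i, by rw [Metric.mem_closedBall, Real.dist_eq]; exact hi⟩
  have hm : MeasureTheory.volume (Set.Icc (0:ℝ) 1)
      ≤ ∑ i : Fin n, MeasureTheory.volume (Metric.closedBall (kron α i) h) :=
    le_trans (MeasureTheory.measure_mono hcover) (MeasureTheory.measure_iUnion_fintype_le _ _)
  rw [Real.volume_Icc] at hm
  simp only [Real.volume_closedBall] at hm
  rw [Finset.sum_const, Finset.card_univ, Fintype.card_fin, nsmul_eq_mul] at hm
  have h1 : (ENNReal.ofReal (1 - 0)) = ENNReal.ofReal 1 := by norm_num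
  rw [h1] at hm
  have h2 : (n : ℝ≥0∞) * ENNReal.ofReal (2 * h) = ENNReal.ofReal ((n:ℝ) * (2 * h)) := by
    rw [ENNReal.ofReal_mul (by positivity : (0:ℝ) ≤ (n:ℝ)), ENNReal.ofReal_natCast]
  rw [h2] at hm
  have h3 : (1:ℝ) ≤ (n:ℝ) * (2 * h) := by
    have := (ENNReal.ofReal_le_ofReal_iff (by positivity)).mp hm
    linarith
  linarith

end Geom2

section Main
variable {α : ℝ}

lemma fillDist_le_one (n : ℕ) (hn : 2 ≤ n) : fillDist (kron α) n ≤ 1 := by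
  refine fillDist_le (by omega) fun y hy0 hy1 => ⟨⟨0, by omega⟩, ?_⟩
  rw [kron_zero, sub_zero, abs_of_nonneg hy0]
  exact hy1

/-- Backward direction: badly approximable implies quasi-uniform. -/
lemma quasi_of_bounded (hirr : Irrational α) (B : ℕ) (hB : ∀ j ≥ 1, partialQuot α j ≤ B) :
    ∃ C : ℝ, ∀ n ≥ 2, fillDist (kron α) n ≤ C * sepRad (kron α) n := by
  refine ⟨max (4 * (B + 1) : ℝ) (2 / eta α 2), fun n hn => ?_⟩
  have hex : ∃ m : ℕ, 1 ≤ m ∧ n ≤ denomSeq α (m + 1) := by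
    refine ⟨n, by omega, ?_⟩
    exact le_trans (le_denomSeq hirr n) (denomSeq_mono hirr n)
  set m := Nat.find hex with hm
  obtain ⟨hm1, hmn⟩ := Nat.find_spec hex
  rw [← hm] at hm1 hmn
  set η := eta α (m + 1) with hη
  have hηpos : 0 < η := eta_pos hirr (m+1)
  -- separation lower bound
  have hsep : η / 2 ≤ sepRad (kron α) n := by
    refine sepRad_ge hn fun i j hij => ?_
    have hk1 : 1 ≤ (j : ℕ) - (i : ℕ) := by omega
    have hk2 : (j : ℕ) - (i : ℕ) < denomSeq α (m+1) := by omega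
    have hmin := best_approx_fract hirr m ((j:ℕ) - (i:ℕ)) hk1 hk2
    refine le_trans ?_ (pair_dist (i:ℕ) (j:ℕ) hij)
    exact le_min hmin.1 hmin.2
  have hsepnn : (0:ℝ) ≤ sepRad (kron α) n := le_trans (by positivity) hsep
  rcases lt_or_ge (denomSeq α m) n with hcase | hcase
  · -- main case : s_m < n ≤ s_{m+1}
    have hme : m - 1 + 1 = m := by omega
    have hfill : fillDist (kron α) n ≤ eta α m + eta α (m+1) := by
      have hsm1n : denomSeq α (m-1) < n := by
        have := denomSeq_mono hirr (m-1)
        rw [hme] at this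
        omega
      rcases Nat.even_or_odd m with hev | hod
      · have hodd : Odd (m - 1) := by
          rcases hev with ⟨t, ht⟩
          refine ⟨t - 1, by omega⟩
        have h1 := fill_le (α := α) n (denomSeq α m) (denomSeq α (m-1)) hn
          (one_le_denomSeq hirr m) hcase (one_le_denomSeq hirr (m-1)) hsm1n
          (by rw [fract_denomSeq_even hirr m hev]; exact hηpos)
        rw [fract_denomSeq_even hirr m hev, fract_denomSeq_odd hirr (m-1) hodd, hme] at h1
        rw [← hη]
        linarith
      · have heven : Even (m - 1) := by
          rcases hod with ⟨t, ht⟩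
          exact ⟨t, by omega⟩
        have h1 := fill_le (α := α) n (denomSeq α (m-1)) (denomSeq α m) hn
          (one_le_denomSeq hirr (m-1)) hsm1n (one_le_denomSeq hirr m) hcase
          (by rw [fract_denomSeq_even hirr (m-1) heven, hme]; exact eta_pos hirr m)
        rw [fract_denomSeq_even hirr (m-1) heven, fract_denomSeq_odd hirr m hod, hme] at h1
        rw [← hη]
        linarith
    have heta : eta α m ≤ (B + 1) * η := by
      have hr := eta_rec hirr m
      have hpq : (partialQuot α (m+1) : ℝ) ≤ B := by exact_mod_cast hB (m+1) (by omega)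
      have hη2 : eta α (m+2) ≤ eta α (m+1) := (eta_succ_lt hirr (m+1)).le
      have h2 : 0 < eta α (m+2) := eta_pos hirr (m+2)
      rw [hη]
      nlinarith [hηpos]
    calc fillDist (kron α) n ≤ eta α m + eta α (m+1) := hfill
      _ ≤ (B + 2) * η := by rw [← hη] at *; linarith
      _ = (4 * (B+1) : ℝ) * (η / 2) - B * η := by ring
      _ ≤ (4 * (B+1) : ℝ) * (η / 2) := by
          have : (0:ℝ) ≤ B * η := by positivity
          linarith
      _ ≤ (4 * (B+1) : ℝ) * sepRad (kron α) n := by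
          apply mul_le_mul_of_nonneg_left hsep (by positivity)
      _ ≤ max (4 * (B + 1) : ℝ) (2 / eta α 2) * sepRad (kron α) n :=
          mul_le_mul_of_nonneg_right (le_max_left _ _) hsepnn
  · -- corner case : n ≤ s_m, which forces m = 1
    have hm1' : m = 1 := by
      by_contra hne
      have h2m : 2 ≤ m := by omega
      have hmin := Nat.find_min hex (m := m - 1) (by omega)
      push_neg at hmin
      have := hmin (by omega)
      have heq : m - 1 + 1 = m := by omega
      rw [heq] at this
      omega
    rw [hm1'] at hη
    have hfill : fillDist (kron α) n ≤ 1 := fillDist_le_one n hn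
    have hepos : 0 < eta α 2 := eta_pos hirr 2
    calc fillDist (kron α) n ≤ 1 := hfill
      _ = (2 / eta α 2) * (eta α 2 / 2) := by field_simp
      _ ≤ (2 / eta α 2) * sepRad (kron α) n := by
          apply mul_le_mul_of_nonneg_left (hη ▸ hsep) (by positivity)
      _ ≤ max (4 * (B + 1) : ℝ) (2 / eta α 2) * sepRad (kron α) n :=
          mul_le_mul_of_nonneg_right (le_max_right _ _) hsepnn

end Main

section Fwd
variable {α : ℝ}

lemma sepRad_nonneg (n : ℕ) (hn : 2 ≤ n) : 0 ≤ sepRad (kron α) n := by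
  have := sepRad_ge (α := α) hn (b := 0) (fun i j _ => abs_nonneg _)
  linarith

/-- Quasi-uniformity forces irrationality. -/
lemma irrational_of_quasi
    (h : ∃ C : ℝ, ∀ n ≥ 2, fillDist (kron α) n ≤ C * sepRad (kron α) n) :
    Irrational α := by
  by_contra hrat
  have hq' : ∃ q : ℚ, (q : ℝ) = α := by
    simpa [Irrational, Set.mem_range] using hrat
  obtain ⟨q, hq⟩ := hq'
  obtain ⟨C, hC⟩ := h
  set d := q.den with hd
  have hd1 : 1 ≤ d := q.den_pos
  have hdz : ((d:ℤ)) ≠ 0 := by positivity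
  have hdpos : (0:ℤ) < (d:ℤ) := by positivity
  have hmaps : ∀ i ∈ Finset.range (d+1),
      ((((i:ℤ)) * q.num) % d).toNat ∈ Finset.range d := by
    intro i _
    rw [Finset.mem_range]
    have h1 := Int.emod_lt_of_pos ((i:ℤ) * q.num) hdpos
    have h2 := Int.emod_nonneg ((i:ℤ) * q.num) hdz
    omega
  obtain ⟨i, hi, j, hj, hij, hfeq⟩ := Finset.exists_ne_map_eq_of_card_lt_of_maps_to
    (by simp : (Finset.range d).card < (Finset.range (d+1)).card) hmaps
  rw [Finset.mem_range] at hi hj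
  have hkey : ∀ a b : ℕ, a < b → b < d + 1 →
      ((a:ℤ) * q.num) % d = ((b:ℤ) * q.num) % d → kron α a = kron α b := by
    intro a b hab hbd hmod
    have hz : ((b:ℤ) * q.num - (a:ℤ) * q.num) % d = 0 :=
      Int.emod_eq_emod_iff_emod_sub_eq_zero.mp hmod.symm
    obtain ⟨t, ht⟩ := Int.dvd_of_emod_eq_zero hz
    have hqcast : (q : ℝ) = (q.num : ℝ) / (d : ℝ) := by
      rw [Rat.cast_def, hd]
    have hreal : (b : ℝ) * α - (a : ℝ) * α = (t : ℝ) := by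
      rw [← hq, hqcast]
      have ht' : ((b:ℝ) * q.num - (a:ℝ) * q.num) = (d : ℝ) * t := by exact_mod_cast ht
      have hdR : (d : ℝ) ≠ 0 := by positivity
      field_simp
      linarith [ht']
    rw [kron, kron]
    symm
    exact Int.fract_eq_fract.mpr ⟨t, hreal⟩
  have hkroneq : ∃ a b : ℕ, a < b ∧ b < d + 1 ∧ kron α a = kron α b := by
    rcases lt_or_gt_of_ne hij with hlt | hgt
    · refine ⟨i, j, hlt, hj, hkey i j hlt hj ?_⟩
      have h1 := Int.emod_nonneg ((i:ℤ) * q.num) hdz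
      have h2 := Int.emod_nonneg ((j:ℤ) * q.num) hdz
      omega
    · refine ⟨j, i, hgt, hi, hkey j i hgt hi ?_⟩
      have h1 := Int.emod_nonneg ((i:ℤ) * q.num) hdz
      have h2 := Int.emod_nonneg ((j:ℤ) * q.num) hdz
      omega
  obtain ⟨a, b, hab, hbd, hkeq⟩ := hkroneq
  set n := d + 1 with hn
  have hn2 : 2 ≤ n := by omega
  have hsep0 : sepRad (kron α) n = 0 := by
    have hle : sepRad (kron α) n ≤ |kron α a - kron α b| / 2 :=
      sepRad_le (i := ⟨a, by omega⟩) (j := ⟨b, by omega⟩) (by simpa [Fin.lt_def] using hab)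
    rw [hkeq, sub_self, abs_zero] at hle
    have hge := sepRad_nonneg (α := α) n hn2
    linarith
  have hfl := fill_lower (α := α) n (by omega)
  have hfc := hC n hn2
  rw [hsep0, mul_zero] at hfc
  have hnR : (0:ℝ) < (n:ℝ) := by positivity
  nlinarith

/-- Quasi-uniformity forces bounded partial quotients. -/
lemma bounded_of_quasi (hirr : Irrational α) (C : ℝ)
    (hC : ∀ n ≥ 2, fillDist (kron α) n ≤ C * sepRad (kron α) n) :
    ∀ j ≥ 1, partialQuot α j ≤ ⌈3 * C⌉₊ := by
  -- C is positive
  have hCpos : 0 < C := by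
    have h2 := hC 2 le_rfl
    have hfl := fill_lower (α := α) 2 (by omega)
    have hsep := sepRad_nonneg (α := α) 2 (by omega)
    norm_num at hfl
    by_contra hc
    push_neg at hc
    have hcs : C * sepRad (kron α) 2 ≤ 0 := mul_nonpos_iff.mpr (Or.inr ⟨hc, hsep⟩)
    linarith
  intro j hj
  obtain ⟨m, rfl⟩ : ∃ m, j = m + 1 := ⟨j - 1, by omega⟩
  set s := denomSeq α m with hs
  have hs1 : 1 ≤ s := one_le_denomSeq hirr m
  set n := s + 2 with hn
  have hn2 : 2 ≤ n := by omega
  set η := eta α (m+1) with hη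
  have hηpos : 0 < η := eta_pos hirr (m+1)
  have hηfr : η ≤ Int.fract α := by
    have h := eta_anti hirr (show 1 ≤ m + 1 by omega)
    rw [eta_one] at h
    exact hη ▸ h
  -- separation upper bound η/2 via an explicit close pair
  have hsep : sepRad (kron α) n ≤ η / 2 := by
    rcases Nat.even_or_odd m with hev | hod
    · have hfr : kron α s = η := by
        rw [kron, hη, hs]
        exact fract_denomSeq_even hirr m hev
      have hle : sepRad (kron α) n ≤ |kron α 0 - kron α s| / 2 :=
        sepRad_le (i := ⟨0, by omega⟩) (j := ⟨s, by omega⟩) (by simp [Fin.lt_def]; omega)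
      rw [kron_zero, hfr, zero_sub, abs_neg, abs_of_pos hηpos] at hle
      exact hle
    · have hfrs : Int.fract ((s:ℝ) * α) = 1 - η := by
        rw [hη, hs]; exact fract_denomSeq_odd hirr m hod
      have hx1 : kron α 1 = Int.fract α := by rw [kron]; norm_num
      have hxo : kron α (s+1) = Int.fract α - η := by
        have hfr' : (s:ℝ) * α - (⌊(s:ℝ)*α⌋ : ℝ) = 1 - η := by
          have h := hfrs
          rwa [Int.fract] at h
        have hfa : Int.fract α = α - ⌊α⌋ := rfl
        have heq : Int.fract (((s+1 : ℕ) : ℝ) * α) = Int.fract (Int.fract α - η) := by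
          apply Int.fract_eq_fract.mpr
          refine ⟨⌊(s:ℝ)*α⌋ + ⌊α⌋ + 1, ?_⟩
          rw [hfa]
          push_cast
          linarith
        rw [kron, heq, Int.fract_eq_self.mpr
          ⟨by linarith [hηfr], by linarith [Int.fract_lt_one α, hηpos]⟩]
      have hle : sepRad (kron α) n ≤ |kron α 1 - kron α (s+1)| / 2 :=
        sepRad_le (i := ⟨1, by omega⟩) (j := ⟨s+1, by omega⟩)
          (by simp [Fin.lt_def]; omega)
      rw [hx1, hxo] at hle
      have : |Int.fract α - (Int.fract α - η)| = η := by
        rw [show Int.fract α - (Int.fract α - η) = η by ring, abs_of_pos hηpos]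
      rw [this] at hle
      exact hle
  -- combine
  have hfl := fill_lower (α := α) n (by omega)
  have hfc := hC n hn2
  have hsepnn := sepRad_nonneg (α := α) n hn2
  have hchain : 1 ≤ (n : ℝ) * C * η := by
    have h1 : fillDist (kron α) n ≤ C * (η / 2) :=
      le_trans hfc (mul_le_mul_of_nonneg_left hsep hCpos.le)
    have hnR : (0:ℝ) ≤ (n:ℝ) := by positivity
    nlinarith
  have hid := denom_eta_identity hirr m
  have hpq := pq_mul_le_denomSeq hirr m
  have hsm1 : (0:ℝ) < eta α (m+2) := eta_pos hirr (m+2)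
  have hsnat : (1:ℝ) ≤ (s:ℝ) := by exact_mod_cast hs1
  have hsub : (denomSeq α (m+1) : ℝ) * η < 1 := by
    rw [hη]
    nlinarith [hid, mul_pos (lt_of_lt_of_le zero_lt_one hsnat) hsm1,
      (by exact_mod_cast one_le_denomSeq hirr m : (1:ℝ) ≤ (denomSeq α m : ℝ))]
  have hpqR : (partialQuot α (m+1) : ℝ) * (s:ℝ) ≤ (denomSeq α (m+1) : ℝ) := by
    exact_mod_cast hpq
  have hfinal : (partialQuot α (m+1) : ℝ) < 3 * C := by
    have hcn : (n:ℝ) = (s:ℝ) + 2 := by rw [hn]; push_cast; ring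
    have h3 : (n:ℝ) ≤ 3 * (s:ℝ) := by rw [hcn]; linarith
    have hsη : 0 < (s:ℝ) * η := by positivity
    have h4 : 1 ≤ 3 * (s:ℝ) * C * η := by nlinarith
    nlinarith [mul_le_mul_of_nonneg_right hpqR hηpos.le]
  have hceil : (3:ℝ) * C ≤ (⌈3 * C⌉₊ : ℝ) := Nat.le_ceil _
  exact_mod_cast le_of_lt (lt_of_lt_of_le hfinal hceil)

end Fwd

/-- Main theorem: the Kronecker sequence is quasi-uniform over `[0,1]` iff `α`
is badly approximable. -/
theorem kronecker_quasi_uniform_iff_badly_approximable (α : ℝ) (hpos : 0 < α) :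
    (∃ C : ℝ, ∀ n ≥ 2, fillDist (kron α) n ≤ C * sepRad (kron α) n) ↔
      (Irrational α ∧ ∃ B : ℕ, ∀ j ≥ 1, partialQuot α j ≤ B) := by
  constructor
  · intro h
    have hirr := irrational_of_quasi h
    obtain ⟨C, hC⟩ := h
    exact ⟨hirr, ⟨⌈3*C⌉₊, bounded_of_quasi hirr C hC⟩⟩
  · rintro ⟨hirr, B, hB⟩
    exact quasi_of_bounded hirr B hB
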